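/- Let G = (V, E) be a finite undirected simple graph and let s ≥ 1 be an integer. Suppose F ⊆ V induces an s-bundle in G, S ⊆ F, and u ∈ S. Then the number of vertices of F outside S that are not adjacent to u satisfies |(F \ S) \ N_G(u)| ≤ s − 1 − |S \ N_G[u]| (as integers); that is, at most s − 1 − |S \ N_G[u]| further non-neighbors of u can be added to the partial solution S (justifying the multi-branching rule with t = s − 1 − |S \ N_G[u]| branches on the non-neighbors of u). -/
import Mathlib


open Finset

variable {V : Type*} [Fintype V] [DecidableEq V]

/-- `S` induces an `s`-bundle in `G`: for every `T ⊆ S` with `|T| < |S| - s`,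
the subgraph of `G` induced on `S \ T` is connected. -/
def IsSBundle (G : SimpleGraph V) (s : ℕ) (S : Finset V) : Prop :=
  ∀ T ⊆ S, (T.card : ℤ) < (S.card : ℤ) - (s : ℤ) →
    (G.induce (↑(S \ T) : Set V)).Connected

/-- Multi-branching rule: for an `s`-bundle `F`, a partial solution `S ⊆ F`
and `u ∈ S`, at most `s - 1 - |S \ N_G[u]|` vertices of `F \ S` are
non-neighbors of `u`. -/
theorem multi_branching_bound (G : SimpleGraph V) [DecidableRel G.Adj]
    (s : ℕ) (hs : 1 ≤ s) (F : Finset V) (hF : IsSBundle G s F)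
    (S : Finset V) (hSF : S ⊆ F) (u : V) (hu : u ∈ S) :
    (((F \ S) \ G.neighborFinset u).card : ℤ) ≤
      (s : ℤ) - 1 - ((S \ insert u (G.neighborFinset u)).card : ℤ) := by
  have huF : u ∈ F := hSF hu
  set A := F \ insert u (G.neighborFinset u) with hAdef
  -- Key claim: |A| ≤ s - 1
  have key : (A.card : ℤ) ≤ (s : ℤ) - 1 := by
    by_contra h
    push_neg at h
    have hsA : s ≤ A.card := by exact_mod_cast by omega
    obtain ⟨v, hv⟩ : A.Nonempty := card_pos.mp (by omega)
    have hvA := hv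
    rw [hAdef, mem_sdiff, mem_insert, SimpleGraph.mem_neighborFinset] at hvA
    set T := F ∩ G.neighborFinset u with hTdef
    have hTF : T ⊆ F := inter_subset_left
    have hFT : F \ T = insert u A := by
      ext x
      simp only [hTdef, hAdef, mem_sdiff, mem_inter, mem_insert,
        SimpleGraph.mem_neighborFinset]
      constructor
      · rintro ⟨hxF, hx⟩
        by_cases hxu : x = u
        · exact Or.inl hxu
        · exact Or.inr ⟨hxF, fun h => h.elim hxu (fun h' => hx ⟨hxF, h'⟩)⟩
      · rintro (rfl | ⟨hxF, hx⟩)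
        · exact ⟨huF, fun h => G.irrefl h.2⟩
        · exact ⟨hxF, fun h => hx (Or.inr h.2)⟩
    have hcard : F.card = T.card + 1 + A.card := by
      have h1 : (F \ T).card = F.card - T.card := card_sdiff_of_subset hTF
      have huA : u ∉ A := by
        intro hmem
        rw [hAdef, mem_sdiff, mem_insert] at hmem
        exact hmem.2 (Or.inl rfl)
      have h2 : (F \ T).card = A.card + 1 := by
        rw [hFT, card_insert_of_notMem huA]
      have h3 : T.card ≤ F.card := card_le_card hTF
      omega
    have hconn := hF T hTF (by omega)
    rw [hFT] at hconn
    -- u is isolated in the induced subgraph on `insert u A`, but v ≠ u is there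
    have huu : u ∈ (↑(insert u A) : Set V) := by simp
    have hvv : v ∈ (↑(insert u A) : Set V) := by simp [hv]
    obtain ⟨w⟩ := hconn.preconnected ⟨u, huu⟩ ⟨v, hvv⟩
    cases w with
    | nil => exact hvA.2 (Or.inl rfl)
    | cons hadj p =>
        rename_i b
        rw [SimpleGraph.comap_adj] at hadj
        have hbG : G.Adj u ↑b := hadj
        have hbmem : ↑b ∈ insert u A := b.2
        rw [mem_insert] at hbmem
        rcases hbmem with hbu | hbA
        · exact G.irrefl (hbu ▸ hbG)
        · have h2 : ↑b ∈ F \ insert u (G.neighborFinset u) := hbA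
          rw [mem_sdiff, mem_insert, SimpleGraph.mem_neighborFinset] at h2
          exact h2.2 (Or.inr hbG)
  -- Now conclude from the key claim
  have hsub1 : (F \ S) \ G.neighborFinset u ⊆ A := by
    intro x hx
    rw [mem_sdiff, mem_sdiff] at hx
    rw [hAdef, mem_sdiff, mem_insert]
    refine ⟨hx.1.1, ?_⟩
    rintro (rfl | h)
    · exact hx.1.2 hu
    · exact hx.2 h
  have hsub2 : S \ insert u (G.neighborFinset u) ⊆ A :=
    sdiff_subset_sdiff hSF (Finset.Subset.refl _)
  have hdisj : Disjoint ((F \ S) \ G.neighborFinset u)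
      (S \ insert u (G.neighborFinset u)) := by
    rw [Finset.disjoint_left]
    intro x hx hx'
    rw [mem_sdiff, mem_sdiff] at hx
    rw [mem_sdiff] at hx'
    exact hx.1.2 hx'.1
  have hcards : ((F \ S) \ G.neighborFinset u).card
      + (S \ insert u (G.neighborFinset u)).card ≤ A.card := by
    rw [← card_union_of_disjoint hdisj]
    exact card_le_card (union_subset hsub1 hsub2)
  push_cast at key ⊢
  omega
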